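/- Let β be the golden ratio (1+√5)/2. Then the set of distances between consecutive nonnegative β-integers is exactly {1, β−1}. -/

import Mathlib

namespace Stmt8Aux

variable {β : ℝ}

lemma powpos (hb1 : 1 < β) (i : ℕ) : (0:ℝ) < β ^ i := pow_pos (by linarith) i

lemma onelepow (hb1 : 1 < β) (i : ℕ) : (1:ℝ) ≤ β ^ i := one_le_pow₀ hb1.le

lemma powle (hb1 : 1 < β) {a b : ℕ} (h : a ≤ b) : β ^ a ≤ β ^ b :=
  pow_le_pow_right₀ hb1.le h

lemma sumnn (hb1 : 1 < β) (S : Finset ℕ) : 0 ≤ ∑ i ∈ S, β ^ i :=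
  Finset.sum_nonneg fun i _ => (powpos hb1 i).le

lemma memle (hb1 : 1 < β) {T : Finset ℕ} {t : ℕ} (ht : t ∈ T) :
    β ^ t ≤ ∑ i ∈ T, β ^ i :=
  Finset.single_le_sum (fun i _ => (powpos hb1 i).le) ht

lemma eraseadm {S : Finset ℕ} (h : ∀ i ∈ S, i + 1 ∉ S) (a : ℕ) :
    ∀ i ∈ S.erase a, i + 1 ∉ S.erase a := fun i hi hc =>
  h i (Finset.mem_of_mem_erase hi) (Finset.mem_of_mem_erase hc)

lemma maxzero {S : Finset ℕ} (hne : S.Nonempty) (h : S.max' hne = 0) : S = {0} := by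
  apply Finset.eq_singleton_iff_unique_mem.mpr
  refine ⟨h ▸ S.max'_mem hne, fun x hx => ?_⟩
  have := S.le_max' x hx
  omega

lemma lemD (hb1 : 1 < β) (hb2 : β ^ 2 = β + 1) :
    ∀ S : Finset ℕ, (∀ i ∈ S, i + 1 ∉ S) → ∀ k : ℕ, (∀ i ∈ S, i < k) →
    ∑ i ∈ S, β ^ i ≤ β ^ k - (β - 1) := by
  intro S
  induction S using Finset.strongInductionOn with
  | _ S ih =>
    intro hadm k hk
    rcases Finset.eq_empty_or_nonempty S with rfl | hne
    · simp only [Finset.sum_empty]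
      have h1 := onelepow hb1 k
      have hβ2 : β < 2 := by nlinarith
      linarith
    · have hsmem : S.max' hne ∈ S := S.max'_mem hne
      set s := S.max' hne with hs
      have hsk : s < k := hk s hsmem
      rcases Nat.eq_zero_or_pos s with h0 | hpos
      · rw [maxzero hne h0]
        simp only [Finset.sum_singleton, pow_zero]
        have h1 : β ^ 1 ≤ β ^ k := powle hb1 (by omega)
        rw [pow_one] at h1
        linarith
      · obtain ⟨j, hj⟩ : ∃ j, s = j + 1 := ⟨s - 1, by omega⟩
        have hsub : S.erase s ⊂ S := Finset.erase_ssubset hsmem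
        have hadm' := eraseadm hadm s
        have hk' : ∀ i ∈ S.erase s, i < j := by
          intro i hi
          have hiS := Finset.mem_of_mem_erase hi
          have hne' : i ≠ s := Finset.ne_of_mem_erase hi
          have hle : i ≤ s := S.le_max' i hiS
          have hij : i ≠ j := by
            intro h; apply hadm i hiS; rw [h, ← hj]; exact hsmem
          omega
        have hIH := ih _ hsub hadm' j hk'
        have hsum : ∑ i ∈ S.erase s, β ^ i + β ^ s = ∑ i ∈ S, β ^ i :=
          Finset.sum_erase_add S _ hsmem
        have e1 : β ^ (j + 2) = β ^ (j + 1) + β ^ j := by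
          rw [pow_add, hb2, pow_succ]; ring
        have e2 : β ^ (j + 2) ≤ β ^ k := powle hb1 (by omega)
        rw [hj] at hsum hIH
        linarith

lemma lemD' (hb1 : 1 < β) (hb2 : β ^ 2 = β + 1) :
    ∀ S : Finset ℕ, (∀ i ∈ S, i + 1 ∉ S) → (∀ i ∈ S, 1 ≤ i) → ∀ k : ℕ, (∀ i ∈ S, i < k) →
    ∑ i ∈ S, β ^ i ≤ β ^ k - 1 := by
  intro S
  induction S using Finset.strongInductionOn with
  | _ S ih =>
    intro hadm h1 k hk
    rcases Finset.eq_empty_or_nonempty S with rfl | hne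
    · simp only [Finset.sum_empty]
      have := onelepow hb1 k
      linarith
    · have hsmem : S.max' hne ∈ S := S.max'_mem hne
      set s := S.max' hne with hs
      have hsk : s < k := hk s hsmem
      have hpos : 1 ≤ s := h1 s hsmem
      obtain ⟨j, hj⟩ : ∃ j, s = j + 1 := ⟨s - 1, by omega⟩
      have hsub : S.erase s ⊂ S := Finset.erase_ssubset hsmem
      have hadm' := eraseadm hadm s
      have h1' : ∀ i ∈ S.erase s, 1 ≤ i := fun i hi => h1 i (Finset.mem_of_mem_erase hi)
      have hk' : ∀ i ∈ S.erase s, i < j := by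
        intro i hi
        have hiS := Finset.mem_of_mem_erase hi
        have hne' : i ≠ s := Finset.ne_of_mem_erase hi
        have hle : i ≤ s := S.le_max' i hiS
        have hij : i ≠ j := by
          intro h; apply hadm i hiS; rw [h, ← hj]; exact hsmem
        omega
      have hIH := ih _ hsub hadm' h1' j hk'
      have hsum : ∑ i ∈ S.erase s, β ^ i + β ^ s = ∑ i ∈ S, β ^ i :=
        Finset.sum_erase_add S _ hsmem
      have e1 : β ^ (j + 2) = β ^ (j + 1) + β ^ j := by
        rw [pow_add, hb2, pow_succ]; ring
      have e2 : β ^ (j + 2) ≤ β ^ k := powle hb1 (by omega)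
      rw [hj] at hsum hIH
      linarith

lemma main (hb1 : 1 < β) (hb2 : β ^ 2 = β + 1) :
    ∀ n : ℕ, ∀ S T : Finset ℕ, S.card + T.card ≤ n →
      (∀ i ∈ S, i + 1 ∉ S) → (∀ i ∈ T, i + 1 ∉ T) →
      ∑ i ∈ S, β ^ i < ∑ i ∈ T, β ^ i →
      ∑ i ∈ S, β ^ i + (if 0 ∈ S then β - 1 else 1) ≤ ∑ i ∈ T, β ^ i := by
  intro n
  induction n with
  | zero =>
    intro S T hcard _ _ hlt
    have hS : S = ∅ := Finset.card_eq_zero.mp (by omega)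
    have hT : T = ∅ := Finset.card_eq_zero.mp (by omega)
    subst hS; subst hT; simp at hlt
  | succ n ih =>
    intro S T hcard hadmS hadmT hlt
    rcases Finset.eq_empty_or_nonempty T with rfl | hTne
    · exfalso
      have := sumnn hb1 S
      simp only [Finset.sum_empty] at hlt
      linarith
    rcases Finset.eq_empty_or_nonempty S with rfl | hSne
    · rw [if_neg (Finset.notMem_empty 0)]
      simp only [Finset.sum_empty, zero_add]
      have ht : T.max' hTne ∈ T := T.max'_mem hTne
      exact le_trans (onelepow hb1 _) (memle hb1 ht)
    have hsmem : S.max' hSne ∈ S := S.max'_mem hSne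
    have htmem : T.max' hTne ∈ T := T.max'_mem hTne
    set s := S.max' hSne with hsd
    set t := T.max' hTne with htd
    rcases lt_trichotomy t s with hts | hts | hts
    · exfalso
      have h1 : ∑ i ∈ T, β ^ i ≤ β ^ (t + 1) - (β - 1) :=
        lemD hb1 hb2 T hadmT (t + 1) (fun i hi => by have := T.le_max' i hi; omega)
      have h2 : β ^ (t + 1) ≤ β ^ s := powle hb1 (by omega)
      have h3 : β ^ s ≤ ∑ i ∈ S, β ^ i := memle hb1 hsmem
      linarith
    · -- t = s
      rcases Nat.eq_zero_or_pos s with h0 | hpos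
      · exfalso
        have hSeq := maxzero hSne (hsd ▸ h0)
        have hTeq := maxzero hTne (htd ▸ (hts.trans h0))
        rw [hSeq, hTeq] at hlt
        exact lt_irrefl _ hlt
      · have hsT : s ∈ T := by rw [← hts]; exact htmem
        have hcard' : (S.erase s).card + (T.erase s).card ≤ n := by
          rw [Finset.card_erase_of_mem hsmem, Finset.card_erase_of_mem hsT]
          have := Finset.card_pos.mpr hSne
          have := Finset.card_pos.mpr hTne
          omega
        have hsumS : ∑ i ∈ S.erase s, β ^ i + β ^ s = ∑ i ∈ S, β ^ i :=
          Finset.sum_erase_add S _ hsmem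
        have hsumT : ∑ i ∈ T.erase s, β ^ i + β ^ s = ∑ i ∈ T, β ^ i :=
          Finset.sum_erase_add T _ hsT
        have hlt' : ∑ i ∈ S.erase s, β ^ i < ∑ i ∈ T.erase s, β ^ i := by linarith
        have hIH := ih (S.erase s) (T.erase s) hcard' (eraseadm hadmS s) (eraseadm hadmT s) hlt'
        have hδ : (if 0 ∈ S.erase s then β - 1 else 1) = (if 0 ∈ S then β - 1 else 1) := by
          by_cases h0' : 0 ∈ S
          · rw [if_pos h0', if_pos (Finset.mem_erase.mpr ⟨by omega, h0'⟩)]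
          · rw [if_neg h0', if_neg (fun hc => h0' (Finset.mem_of_mem_erase hc))]
        rw [hδ] at hIH
        linarith
    · -- s < t
      have h1 : β ^ t ≤ ∑ i ∈ T, β ^ i := memle hb1 htmem
      have h2 : β ^ (s + 1) ≤ β ^ t := powle hb1 (by omega)
      by_cases h0 : 0 ∈ S
      · rw [if_pos h0]
        have h3 : ∑ i ∈ S, β ^ i ≤ β ^ (s + 1) - (β - 1) :=
          lemD hb1 hb2 S hadmS (s + 1) (fun i hi => by have := S.le_max' i hi; omega)
        linarith
      · rw [if_neg h0]
        have h3 : ∑ i ∈ S, β ^ i ≤ β ^ (s + 1) - 1 :=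
          lemD' hb1 hb2 S hadmS
            (fun i hi => by
              rcases Nat.eq_zero_or_pos i with h | h
              · exact absurd (h ▸ hi) h0
              · exact h)
            (s + 1) (fun i hi => by have := S.le_max' i hi; omega)
        linarith

lemma succex (hb2 : β ^ 2 = β + 1) :
    ∀ S : Finset ℕ, (∀ i ∈ S, i + 1 ∉ S) → ∀ k : ℕ, (∀ i ∈ S, k < i) →
    ∃ T : Finset ℕ, (∀ i ∈ T, i + 1 ∉ T) ∧
      ∑ i ∈ T, β ^ i = ∑ i ∈ S, β ^ i + β ^ k := by
  intro S
  induction S using Finset.strongInductionOn with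
  | _ S ih =>
    intro hadm k hk
    by_cases h1 : k + 1 ∈ S
    · have hk2 : k + 2 ∉ S := hadm (k + 1) h1
      have hsub : S.erase (k + 1) ⊂ S := Finset.erase_ssubset h1
      have hk' : ∀ i ∈ S.erase (k + 1), k + 2 < i := by
        intro i hi
        have hiS := Finset.mem_of_mem_erase hi
        have h2 := Finset.ne_of_mem_erase hi
        have h3 := hk i hiS
        have h4 : i ≠ k + 2 := fun h => hk2 (h ▸ hiS)
        omega
      obtain ⟨T, hTadm, hTsum⟩ := ih _ hsub (eraseadm hadm (k + 1)) (k + 2) hk'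
      refine ⟨T, hTadm, ?_⟩
      have hsum : ∑ i ∈ S.erase (k + 1), β ^ i + β ^ (k + 1) = ∑ i ∈ S, β ^ i :=
        Finset.sum_erase_add S _ h1
      have e1 : β ^ (k + 2) = β ^ (k + 1) + β ^ k := by
        rw [pow_add, hb2, pow_succ]; ring
      linarith [hTsum]
    · have hkS : k ∉ S := fun h => lt_irrefl k (hk k h)
      refine ⟨insert k S, ?_, ?_⟩
      · intro i hi hc
        rcases Finset.mem_insert.mp hi with rfl | hiS
        · rcases Finset.mem_insert.mp hc with h | h
          · omega
          · exact h1 h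
        · rcases Finset.mem_insert.mp hc with h | h
          · have := hk i hiS; omega
          · exact hadm i hiS h
      · rw [Finset.sum_insert hkS]; ring

end Stmt8Aux

/-- For the golden ratio `β = (1+√5)/2`, the set of distances between
consecutive nonnegative `β`-integers is exactly `{1, β − 1}`. -/
theorem stmt_8 (β : ℝ) (hβ : β = (1 + Real.sqrt 5) / 2)
    (Z : Set ℝ)
    (hZ : Z = {x : ℝ | ∃ S : Finset ℕ, (∀ i ∈ S, i + 1 ∉ S) ∧ x = ∑ i ∈ S, β ^ i}) :
    {d : ℝ | ∃ x ∈ Z, ∃ y ∈ Z, x < y ∧ (∀ z ∈ Z, ¬(x < z ∧ z < y)) ∧ d = y - x}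
      = {1, β - 1} := by
  have h5 : Real.sqrt 5 ^ 2 = 5 := Real.sq_sqrt (by norm_num)
  have h5nn : 0 ≤ Real.sqrt 5 := Real.sqrt_nonneg 5
  have hb1 : 1 < β := by rw [hβ]; nlinarith
  have hb2 : β ^ 2 = β + 1 := by rw [hβ]; nlinarith
  subst hZ
  ext d
  simp only [Set.mem_setOf_eq, Set.mem_insert_iff, Set.mem_singleton_iff]
  constructor
  · rintro ⟨x, ⟨S, hSadm, rfl⟩, y, ⟨T, hTadm, rfl⟩, hxy, hbetween, rfl⟩
    have hmain := Stmt8Aux.main hb1 hb2 (S.card + T.card) S T le_rfl hSadm hTadm hxy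
    by_cases h0 : 0 ∈ S
    · right
      rw [if_pos h0] at hmain
      obtain ⟨T', hT'adm, hT'sum⟩ :=
        Stmt8Aux.succex hb2 (S.erase 0) (Stmt8Aux.eraseadm hSadm 0) 1
          (by
            intro i hi
            have hiS := Finset.mem_of_mem_erase hi
            have h2 := Finset.ne_of_mem_erase hi
            have h3 : i ≠ 1 := by intro h; exact hSadm 0 h0 (by rwa [h] at hiS)
            omega)
      have hsum0 : ∑ i ∈ S.erase 0, β ^ i + β ^ 0 = ∑ i ∈ S, β ^ i :=
        Finset.sum_erase_add S _ h0
      rw [pow_zero] at hsum0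
      rw [pow_one] at hT'sum
      have hT'val : ∑ i ∈ T', β ^ i = ∑ i ∈ S, β ^ i + (β - 1) := by linarith
      have hnb := hbetween (∑ i ∈ T', β ^ i) ⟨T', hT'adm, rfl⟩
      have hlt1 : ∑ i ∈ S, β ^ i < ∑ i ∈ T', β ^ i := by rw [hT'val]; linarith
      have hge : ¬ (∑ i ∈ T', β ^ i < ∑ i ∈ T, β ^ i) := fun h => hnb ⟨hlt1, h⟩
      push_neg at hge
      linarith
    · left
      rw [if_neg h0] at hmain
      obtain ⟨T', hT'adm, hT'sum⟩ :=
        Stmt8Aux.succex hb2 S hSadm 0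
          (fun i hi => Nat.pos_of_ne_zero (fun h => h0 (by rwa [h] at hi)))
      rw [pow_zero] at hT'sum
      have hnb := hbetween (∑ i ∈ T', β ^ i) ⟨T', hT'adm, rfl⟩
      have hlt1 : ∑ i ∈ S, β ^ i < ∑ i ∈ T', β ^ i := by rw [hT'sum]; linarith
      have hge : ¬ (∑ i ∈ T', β ^ i < ∑ i ∈ T, β ^ i) := fun h => hnb ⟨hlt1, h⟩
      push_neg at hge
      linarith
  · rintro (rfl | rfl)
    · refine ⟨0, ⟨∅, by simp, by simp⟩, 1, ⟨{0}, by simp, by simp⟩, by norm_num, ?_, by norm_num⟩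
      rintro z ⟨T, hTadm, rfl⟩ ⟨hz0, hz1⟩
      have hmain := Stmt8Aux.main hb1 hb2 (Finset.card ∅ + T.card) ∅ T le_rfl
        (by simp) hTadm (by simpa using hz0)
      rw [Finset.sum_empty, if_neg (Finset.notMem_empty 0)] at hmain
      linarith
    · refine ⟨1, ⟨{0}, by simp, by simp⟩, β, ⟨{1}, by simp, by simp⟩, hb1, ?_, by ring⟩
      rintro z ⟨T, hTadm, rfl⟩ ⟨hz1, hzb⟩
      have hmain := Stmt8Aux.main hb1 hb2 (Finset.card {0} + T.card) {0} T le_rfl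
        (by simp) hTadm (by simpa using hz1)
      rw [Finset.sum_singleton, pow_zero, if_pos (Finset.mem_singleton_self 0)] at hmain
      linarith
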